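/- arXiv:1311.3492 — 8 statements merged into one kernel-verified Lean document; each statement's English description precedes it below -/
import Mathlib

section
/- Call a matrix 'permutation unit LT' if it is permutation similar (A = P L Pᵀ for a permutation matrix P) to a lower triangular matrix with 1's on the diagonal. If A and B are permutation unit LT matrices with A Aᵀ = B Bᵀ, then A = B. -/
open Matrix

/-- `A` is permutation similar (via the permutation matrix of some `σ`) to a lower triangular
matrix with `1`'s on the diagonal. -/
def PermUnitLT {n : ℕ} (A : Matrix (Fin n) (Fin n) ℝ) : Prop :=
  ∃ σ : Equiv.Perm (Fin n),
    (∀ i : Fin n, A (σ i) (σ i) = 1) ∧ ∀ i j : Fin n, i < j → A (σ i) (σ j) = 0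

lemma mulT_apply_delta_row {n : ℕ} (A : Matrix (Fin n) (Fin n) ℝ) (i : Fin n)
    (hd : A i i = 1) (h0 : ∀ k, k ≠ i → A i k = 0) (j : Fin n) :
    (A * Aᵀ) j i = A j i := by
  simp only [Matrix.mul_apply, Matrix.transpose_apply]
  rw [Finset.sum_eq_single i]
  · rw [hd, mul_one]
  · intro k _ hk; rw [h0 k hk, mul_zero]
  · intro hk; exact absurd (Finset.mem_univ i) hk

lemma key : ∀ n (A B : Matrix (Fin n) (Fin n) ℝ)
    (r s : Fin n → ℕ), Function.Injective r → Function.Injective s →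
    (∀ i, A i i = 1) → (∀ i j, r i < r j → A i j = 0) →
    (∀ i, B i i = 1) → (∀ i j, s i < s j → B i j = 0) →
    A * Aᵀ = B * Bᵀ → A = B := by
  intro n
  induction n with
  | zero =>
    intro A B _ _ _ _ _ _ _ _ _
    ext i; exact i.elim0
  | succ n ih =>
    intro A B r s hr hs hAd hA0 hBd hB0 h
    obtain ⟨i, -, hi⟩ := Finset.exists_min_image Finset.univ r ⟨0, Finset.mem_univ 0⟩
    -- row i of A is the delta row
    have hArow : ∀ k, k ≠ i → A i k = 0 := by
      intro k hk
      exact hA0 i k (lt_of_le_of_ne (hi k (Finset.mem_univ k)) (fun e => hk (hr e).symm))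
    -- (A Aᵀ) i i = 1
    have hSii : (A * Aᵀ) i i = 1 := by
      rw [mulT_apply_delta_row A i (hAd i) hArow i, hAd i]
    -- row i of B is also the delta row
    have hBrow : ∀ k, k ≠ i → B i k = 0 := by
      have h1 : (B * Bᵀ) i i = 1 := by rw [← h]; exact hSii
      have h2 : ∑ k ∈ Finset.univ.erase i, B i k * B i k = 0 := by
        have := h1
        simp only [Matrix.mul_apply, Matrix.transpose_apply] at this
        rw [← Finset.add_sum_erase _ _ (Finset.mem_univ i), hBd i, mul_one] at this
        linarith
      intro k hk
      have hnn : ∀ k ∈ Finset.univ.erase i, 0 ≤ B i k * B i k :=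
        fun k _ => mul_self_nonneg _
      have := (Finset.sum_eq_zero_iff_of_nonneg hnn).mp h2 k
        (Finset.mem_erase.mpr ⟨hk, Finset.mem_univ k⟩)
      exact mul_self_eq_zero.mp this
    -- column i of A equals column i of B
    have hcol : ∀ j, A j i = B j i := by
      intro j
      rw [← mulT_apply_delta_row A i (hAd i) hArow j, h,
        mulT_apply_delta_row B i (hBd i) hBrow j]
    -- delete row/column i
    set A' : Matrix (Fin n) (Fin n) ℝ := fun j k => A (i.succAbove j) (i.succAbove k) with hA'
    set B' : Matrix (Fin n) (Fin n) ℝ := fun j k => B (i.succAbove j) (i.succAbove k) with hB'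
    have hsa : Function.Injective i.succAbove := Fin.succAbove_right_injective
    have hAB' : A' = B' := by
      apply ih A' B' (r ∘ i.succAbove) (s ∘ i.succAbove)
        (hr.comp hsa) (hs.comp hsa)
        (fun j => hAd _) (fun j k hjk => hA0 _ _ hjk)
        (fun j => hBd _) (fun j k hjk => hB0 _ _ hjk)
      ext j k
      have hjk := congrFun (congrFun h (i.succAbove j)) (i.succAbove k)
      simp only [Matrix.mul_apply, Matrix.transpose_apply] at hjk ⊢
      rw [Fin.sum_univ_succAbove (fun m => A (i.succAbove j) m * A (i.succAbove k) m) i,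
        Fin.sum_univ_succAbove (fun m => B (i.succAbove j) m * B (i.succAbove k) m) i,
        hcol, hcol] at hjk
      simpa [hA', hB'] using add_left_cancel hjk
    ext j k
    by_cases hki : k = i
    · subst hki; exact hcol j
    · by_cases hji : j = i
      · subst hji
        rw [hArow k hki, hBrow k hki]
      · obtain ⟨j', rfl⟩ := Fin.exists_succAbove_eq hji
        obtain ⟨k', rfl⟩ := Fin.exists_succAbove_eq hki
        exact congrFun (congrFun hAB' j') k'

/-- If `A` and `B` are permutation unit lower triangular matrices with `A * Aᵀ = B * Bᵀ`,
then `A = B`. -/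
theorem stmt_2 (n : ℕ) (A B : Matrix (Fin n) (Fin n) ℝ)
    (hA : PermUnitLT A) (hB : PermUnitLT B) (h : A * Aᵀ = B * Bᵀ) : A = B := by
  obtain ⟨σ, hσd, hσ0⟩ := hA
  obtain ⟨τ, hτd, hτ0⟩ := hB
  apply key n A B (fun i => (σ.symm i : ℕ)) (fun i => (τ.symm i : ℕ))
  · exact fun a b hab => by
      have : σ.symm a = σ.symm b := Fin.val_injective hab
      simpa using congrArg σ this
  · exact fun a b hab => by
      have : τ.symm a = τ.symm b := Fin.val_injective hab
      simpa using congrArg τ this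
  · intro i; have := hσd (σ.symm i); simpa using this
  · intro i j hij
    have := hσ0 (σ.symm i) (σ.symm j) (by exact hij)
    simpa using this
  · intro i; have := hτd (τ.symm i); simpa using this
  · intro i j hij
    have := hτ0 (τ.symm i) (τ.symm j) (by exact hij)
    simpa using this
  · exact h
end

section
/- If A and B are n×n permutation unit LT matrices, then tr(A Aᵀ Bᵀ B) ≥ n, with equality if and only if B = A⁻¹. -/
open Matrix

open Finset


lemma scalar_amgm {n : ℕ} (lam : Fin n → ℝ) (h0 : ∀ i, 0 ≤ lam i)
    (hprod : ∏ i, lam i = 1) :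
    (n:ℝ) ≤ ∑ i, lam i ∧ (∑ i, lam i = (n:ℝ) → ∀ i, lam i = 1) := by
  have hle : ∀ i : Fin n, lam i ≤ Real.exp (lam i - 1) := by
    intro i
    have := Real.add_one_le_exp (lam i - 1)
    linarith
  have hsum : ∑ i, (lam i - 1) = ∑ i, lam i - n := by
    rw [Finset.sum_sub_distrib]; simp
  have hprodle : (1:ℝ) ≤ Real.exp (∑ i, lam i - n) := by
    calc (1:ℝ) = ∏ i, lam i := hprod.symm
    _ ≤ ∏ i, Real.exp (lam i - 1) := Finset.prod_le_prod (fun i _ => h0 i) (fun i _ => hle i)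
    _ = Real.exp (∑ i, (lam i - 1)) := (Real.exp_sum _ _).symm
    _ = Real.exp (∑ i, lam i - n) := by rw [hsum]
  have h1 : (n:ℝ) ≤ ∑ i, lam i := by
    have := Real.one_le_exp_iff.mp hprodle
    linarith
  refine ⟨h1, fun hsumn i => ?_⟩
  by_contra hne
  have hpos : ∀ j : Fin n, 0 < lam j := by
    intro j
    rcases (h0 j).lt_or_eq with h | h
    · exact h
    · exfalso
      have : ∏ k, lam k = 0 := Finset.prod_eq_zero (mem_univ j) h.symm
      rw [hprod] at this; norm_num at this
  have hstrict : lam i < Real.exp (lam i - 1) := by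
    have := Real.add_one_lt_exp (x := lam i - 1) (by intro h; apply hne; linarith)
    linarith
  have hlt : ∏ j, lam j < ∏ j, Real.exp (lam j - 1) :=
    Finset.prod_lt_prod (fun j _ => hpos j) (fun j _ => hle j) ⟨i, mem_univ i, hstrict⟩
  rw [hprod, ← Real.exp_sum, hsum, hsumn] at hlt
  simp at hlt


lemma gram_unique : ∀ (N : ℕ) (ι : Type) (_ : Fintype ι) (_ : DecidableEq ι),
    Fintype.card ι = N →
    ∀ (e f : ι → ℕ), Function.Injective e → Function.Injective f →
    ∀ B C : Matrix ι ι ℝ,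
    (∀ i, B i i = 1) → (∀ i j, f i < f j → B i j = 0) →
    (∀ i, C i i = 1) → (∀ i j, e i < e j → C i j = 0) →
    Bᵀ * B = Cᵀ * C → B = C := by
  intro N
  induction N with
  | zero =>
    intro ι _ _ hcard e f _ _ B C _ _ _ _ _
    have : IsEmpty ι := Fintype.card_eq_zero_iff.mp hcard
    ext i j
    exact (this.false i).elim
  | succ N ih =>
    intro ι _ _ hcard e f he hf B C hBd hBl hCd hCl hS
    have hne : (univ : Finset ι).Nonempty := by
      rw [← Finset.card_pos, Finset.card_univ, hcard]; omega
    obtain ⟨r, -, hr⟩ := Finset.exists_max_image univ e hne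
    have hrlt : ∀ i, i ≠ r → e i < e r := fun i hi =>
      lt_of_le_of_ne (hr i (mem_univ i)) (fun h => hi (he h))
    -- entries of the Gram matrix
    have hSB : ∀ i j, (Bᵀ * B) i j = ∑ k, B k i * B k j := by
      intro i j; simp [Matrix.mul_apply, Matrix.transpose_apply]
    have hSC : ∀ i j, (Cᵀ * C) i j = ∑ k, C k i * C k j := by
      intro i j; simp [Matrix.mul_apply, Matrix.transpose_apply]
    have hEq : ∀ i j, ∑ k, B k i * B k j = ∑ k, C k i * C k j := by
      intro i j; rw [← hSB, ← hSC, hS]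
    -- column r of C is e_r
    have hCcol : ∀ k, k ≠ r → C k r = 0 := fun k hk => hCl k r (hrlt k hk)
    -- S r r = 1 via C
    have hSrr : ∑ k, B k r * B k r = 1 := by
      rw [hEq r r, Finset.sum_eq_single r]
      · rw [hCd r]; ring
      · intro k _ hk; rw [hCcol k hk]; ring
      · intro h; exact (h (mem_univ r)).elim
    -- column r of B is e_r
    have hBcol : ∀ k, k ≠ r → B k r = 0 := by
      have hzero : ∑ k ∈ univ.erase r, B k r * B k r = 0 := by
        have := Finset.add_sum_erase univ (fun k => B k r * B k r) (mem_univ r)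
        rw [hSrr] at this
        have h1 : B r r * B r r = 1 := by rw [hBd r]; ring
        linarith
      intro k hk
      have := (Finset.sum_eq_zero_iff_of_nonneg
        (fun k _ => mul_self_nonneg (B k r))).mp hzero k (Finset.mem_erase.mpr ⟨hk, mem_univ k⟩)
      nlinarith [this]
    -- row r of B equals row r of C
    have hrow : ∀ j, B r j = C r j := by
      intro j
      have h1 : ∑ k, B k r * B k j = B r j := by
        rw [Finset.sum_eq_single r]
        · rw [hBd r]; ring
        · intro k _ hk; rw [hBcol k hk]; ring
        · intro h; exact (h (mem_univ r)).elim
      have h2 : ∑ k, C k r * C k j = C r j := by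
        rw [Finset.sum_eq_single r]
        · rw [hCd r]; ring
        · intro k _ hk; rw [hCcol k hk]; ring
        · intro h; exact (h (mem_univ r)).elim
      rw [← h1, hEq, h2]
    -- the restricted matrices
    set ι' := {i : ι // i ≠ r}
    have hcard' : Fintype.card ι' = N := by
      have : Fintype.card ι' = Fintype.card ι - 1 := by
        simp [ι', Fintype.card_subtype_compl, Fintype.card_subtype_eq]
      omega
    have hsub : ∀ g : ι → ℝ, ∑ k : ι', g k.val = ∑ k ∈ univ.erase r, g k := by
      intro g
      rw [Finset.sum_subtype (p := fun i => i ≠ r) (s := univ.erase r) (by simp) g]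
    have key : B.submatrix (Subtype.val : ι' → ι) (Subtype.val : ι' → ι)
        = C.submatrix (Subtype.val : ι' → ι) (Subtype.val : ι' → ι) := by
      refine ih ι' inferInstance inferInstance hcard' (e ∘ Subtype.val) (f ∘ Subtype.val)
        (he.comp Subtype.val_injective) (hf.comp Subtype.val_injective)
        _ _ (fun i => hBd i.val) (fun i j h => hBl i.val j.val h)
        (fun i => hCd i.val) (fun i j h => hCl i.val j.val h) ?_
      ext i j
      have hBe : ∑ k ∈ univ.erase r, B k i.val * B k j.val
          = ∑ k, B k i.val * B k j.val - B r i.val * B r j.val := by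
        have := Finset.add_sum_erase univ (fun k => B k i.val * B k j.val) (mem_univ r)
        linarith
      have hCe : ∑ k ∈ univ.erase r, C k i.val * C k j.val
          = ∑ k, C k i.val * C k j.val - C r i.val * C r j.val := by
        have := Finset.add_sum_erase univ (fun k => C k i.val * C k j.val) (mem_univ r)
        linarith
      simp only [Matrix.mul_apply, Matrix.transpose_apply, Matrix.submatrix_apply]
      rw [hsub (fun k => B k i.val * B k j.val), hsub (fun k => C k i.val * C k j.val),
        hBe, hCe, hEq i.val j.val, hrow i.val, hrow j.val]
    ext i j
    by_cases hi : i = r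
    · subst hi; exact hrow j
    · by_cases hj : j = r
      · subst hj; rw [hBcol i hi, hCcol i hi]
      · exact congrFun (congrFun key ⟨i, hi⟩) ⟨j, hj⟩

section helpers

variable {n : ℕ}

lemma unitLT_det (L : Matrix (Fin n) (Fin n) ℝ) (hd : ∀ i, L i i = 1)
    (hl : ∀ i j, i < j → L i j = 0) : L.det = 1 := by
  have hbt : L.BlockTriangular OrderDual.toDual := by
    intro i j hij
    exact hl i j hij
  rw [Matrix.det_of_lowerTriangular L hbt]
  simp [hd]

lemma unitLT_inv (L : Matrix (Fin n) (Fin n) ℝ) (hd : ∀ i, L i i = 1)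
    (hl : ∀ i j, i < j → L i j = 0) :
    (∀ i, L⁻¹ i i = 1) ∧ ∀ i j, i < j → L⁻¹ i j = 0 := by
  have hdet : IsUnit L.det := by rw [unitLT_det L hd hl]; exact isUnit_one
  haveI : Invertible L := L.invertibleOfIsUnitDet hdet
  have hbt : L.BlockTriangular OrderDual.toDual := fun i j hij => hl i j hij
  have hbtinv : L⁻¹.BlockTriangular OrderDual.toDual :=
    Matrix.blockTriangular_inv_of_blockTriangular hbt
  have hlinv : ∀ i j : Fin n, i < j → L⁻¹ i j = 0 := fun i j hij => hbtinv hij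
  refine ⟨fun i => ?_, hlinv⟩
  have h1 : (L * L⁻¹) i i = 1 := by rw [Matrix.mul_nonsing_inv L hdet]; simp
  rw [Matrix.mul_apply] at h1
  rw [Finset.sum_eq_single i] at h1
  · rw [hd i] at h1; linarith
  · intro k _ hk
    rcases lt_or_gt_of_ne hk with h | h
    · rw [hlinv k i h]; ring
    · rw [hl i k h]; ring
  · intro h; exact (h (mem_univ i)).elim

lemma PermUnitLT.det_one {A : Matrix (Fin n) (Fin n) ℝ} (hA : PermUnitLT A) :
    A.det = 1 := by
  obtain ⟨σ, hd, hl⟩ := hA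
  have : (A.submatrix σ σ).det = A.det := Matrix.det_submatrix_equiv_self σ A
  rw [← this]
  exact unitLT_det _ (fun i => hd i) (fun i j hij => hl i j hij)

lemma PermUnitLT.inv {A : Matrix (Fin n) (Fin n) ℝ} (hA : PermUnitLT A) :
    PermUnitLT A⁻¹ := by
  obtain ⟨σ, hd, hl⟩ := hA
  have hdet : IsUnit A.det := by
    rw [PermUnitLT.det_one ⟨σ, hd, hl⟩]; exact isUnit_one
  have hsub : A⁻¹.submatrix σ σ = (A.submatrix σ σ)⁻¹ := by
    symm
    apply Matrix.inv_eq_right_inv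
    rw [Matrix.submatrix_mul_equiv, Matrix.mul_nonsing_inv A hdet, Matrix.submatrix_one_equiv]
  obtain ⟨hd', hl'⟩ := unitLT_inv (A.submatrix σ σ)
    (fun i => hd i) (fun i j hij => hl i j hij)
  refine ⟨σ, fun i => ?_, fun i j hij => ?_⟩
  · have := congrFun (congrFun hsub i) i
    simp only [Matrix.submatrix_apply] at this
    rw [this, hd' i]
  · have := congrFun (congrFun hsub i) j
    simp only [Matrix.submatrix_apply] at this
    rw [this, hl' i j hij]

end helpers


-- trace = sum of eigenvalues for real symmetric
lemma trace_eq_sum_eig {n : ℕ} {G : Matrix (Fin n) (Fin n) ℝ} (hG : G.IsHermitian) :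
    G.trace = ∑ i, hG.eigenvalues i := by
  conv_lhs => rw [hG.spectral_theorem, Unitary.conjStarAlgAut_apply]
  rw [Matrix.trace_mul_comm, ← mul_assoc]
  have hU : (star (hG.eigenvectorUnitary : Matrix (Fin n) (Fin n) ℝ))
      * (hG.eigenvectorUnitary : Matrix (Fin n) (Fin n) ℝ) = 1 := by
    exact Matrix.mem_unitaryGroup_iff'.mp hG.eigenvectorUnitary.2
  rw [hU, one_mul, Matrix.trace_diagonal]
  simp

-- hermitian with all eigenvalues equal 1 is the identity
lemma eq_one_of_eig_one {n : ℕ} {G : Matrix (Fin n) (Fin n) ℝ} (hG : G.IsHermitian)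
    (h : ∀ i, hG.eigenvalues i = 1) : G = 1 := by
  have hfun : (RCLike.ofReal ∘ hG.eigenvalues : Fin n → ℝ) = fun _ => 1 := by
    funext i; simp [h i]
  have hd : Matrix.diagonal (RCLike.ofReal ∘ hG.eigenvalues) = (1 : Matrix (Fin n) (Fin n) ℝ) := by
    rw [hfun, Matrix.diagonal_one]
  rw [hG.spectral_theorem, hd, map_one]

/-- If `A` and `B` are `n × n` permutation unit lower triangular matrices, then
`tr (A * Aᵀ * Bᵀ * B) ≥ n`, with equality if and only if `B = A⁻¹`. -/
theorem stmt_3 (n : ℕ) (A B : Matrix (Fin n) (Fin n) ℝ)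
    (hA : PermUnitLT A) (hB : PermUnitLT B) :
    (n : ℝ) ≤ (A * Aᵀ * Bᵀ * B).trace ∧
      ((A * Aᵀ * Bᵀ * B).trace = (n : ℝ) ↔ B = A⁻¹) := by
  have hAdet : IsUnit A.det := by rw [hA.det_one]; exact isUnit_one
  have hBdet : IsUnit B.det := by rw [hB.det_one]; exact isUnit_one
  -- the Gram matrix of B*A
  set G := (B * A)ᵀ * (B * A) with hGdef
  have htr : (A * Aᵀ * Bᵀ * B).trace = G.trace := by
    have h1 : A * Aᵀ * Bᵀ * B = A * (Aᵀ * Bᵀ * B) := by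
      simp [mul_assoc]
    have h2 : G = Aᵀ * Bᵀ * B * A := by
      rw [hGdef, Matrix.transpose_mul]
      simp [mul_assoc]
    rw [h1, h2, Matrix.trace_mul_comm]
  have hPSD : G.PosSemidef := by
    have := Matrix.posSemidef_conjTranspose_mul_self (B * A)
    rwa [Matrix.conjTranspose_eq_transpose_of_trivial] at this
  have hHerm : G.IsHermitian := hPSD.1
  set lam := hHerm.eigenvalues with hlam
  have h0 : ∀ i, 0 ≤ lam i := fun i => hPSD.eigenvalues_nonneg i
  have hdetG : G.det = 1 := by
    rw [hGdef, Matrix.det_mul, Matrix.det_transpose, Matrix.det_mul,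
      hA.det_one, hB.det_one]
    norm_num
  have hprod : ∏ i, lam i = 1 := by
    have := hHerm.det_eq_prod_eigenvalues
    rw [hdetG] at this
    exact_mod_cast this.symm
  have htreig : G.trace = ∑ i, lam i := trace_eq_sum_eig hHerm
  obtain ⟨hineq, heqc⟩ := scalar_amgm lam h0 hprod
  constructor
  · rw [htr, htreig]; exact hineq
  constructor
  · -- equality implies B = A⁻¹
    intro heq
    have hG1 : G = 1 := by
      apply eq_one_of_eig_one hHerm
      apply heqc
      rw [← htreig, ← htr, heq]
    -- get BᵀB = (A⁻¹)ᵀ * A⁻¹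
    have hABBA : Aᵀ * (Bᵀ * B) * A = 1 := by
      have : G = Aᵀ * (Bᵀ * B) * A := by
        rw [hGdef, Matrix.transpose_mul]; simp [mul_assoc]
      rw [← this, hG1]
    have hAT : IsUnit Aᵀ.det := by rwa [Matrix.det_transpose]
    have hBB : Bᵀ * B = (A⁻¹)ᵀ * A⁻¹ := by
      calc Bᵀ * B = ((Aᵀ)⁻¹ * Aᵀ) * (Bᵀ * B) * (A * A⁻¹) := by
            rw [Matrix.nonsing_inv_mul _ hAT, Matrix.mul_nonsing_inv _ hAdet, one_mul, mul_one]
      _ = (Aᵀ)⁻¹ * (Aᵀ * (Bᵀ * B) * A) * A⁻¹ := by simp only [mul_assoc]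
      _ = (Aᵀ)⁻¹ * A⁻¹ := by rw [hABBA]; simp
      _ = (A⁻¹)ᵀ * A⁻¹ := by rw [Matrix.transpose_nonsing_inv]
    obtain ⟨σB, hBd, hBl⟩ := hB
    obtain ⟨σC, hCd, hCl⟩ := hA.inv
    have key := gram_unique n (Fin n) inferInstance inferInstance (Fintype.card_fin n)
      (fun x => (σC.symm x : ℕ)) (fun x => (σB.symm x : ℕ))
      (fun x y hxy => σC.symm.injective (Fin.val_injective hxy))
      (fun x y hxy => σB.symm.injective (Fin.val_injective hxy))
      B A⁻¹
      (fun i => by simpa using hBd (σB.symm i))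
      (fun i j hij => by
        have := hBl (σB.symm i) (σB.symm j) (by exact hij)
        simpa using this)
      (fun i => by simpa using hCd (σC.symm i))
      (fun i j hij => by
        have := hCl (σC.symm i) (σC.symm j) (by exact hij)
        simpa using this)
      hBB
    exact key
  · -- B = A⁻¹ implies equality
    intro hBA
    rw [htr, hGdef, hBA, Matrix.nonsing_inv_mul A hAdet]
    simp
end

section
/- Let B be a strictly upper triangular p×p matrix, Ω = diag(σ₁²,…,σ_p²) with σⱼ > 0, and Θ = (I−B) Ω⁻¹ (I−B)ᵀ. If j < k, B_{jk} = 0, and for every ℓ > k at least one of B_{jℓ}, B_{kℓ} is zero (i.e., j and k are not adjacent and share no common child in the DAG defined by the support of B), then Θ_{jk} = 0. -/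
open Matrix

/-- Let `B` be strictly upper triangular, `Ω = diagonal d` with `d j > 0`, and
`Θ = (I - B) Ω⁻¹ (I - B)ᵀ`. If `j < k`, `B j k = 0`, and for every `ℓ > k` at least one of
`B j ℓ`, `B k ℓ` is zero (so `j, k` are non-adjacent and share no common child in the DAG of
the support of `B`), then `Θ j k = 0`. -/
theorem stmt_6 (p : ℕ) (B : Matrix (Fin p) (Fin p) ℝ) (d : Fin p → ℝ)
    (hd : ∀ j, 0 < d j) (hB : ∀ j k : Fin p, ¬ j < k → B j k = 0)
    (j k : Fin p) (hjk : j < k) (hedge : B j k = 0)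
    (hchild : ∀ l : Fin p, k < l → B j l = 0 ∨ B k l = 0) :
    (((1 - B) * (Matrix.diagonal d)⁻¹ * (1 - B)ᵀ : Matrix (Fin p) (Fin p) ℝ)) j k = 0 := by
  rw [Matrix.inv_diagonal, Matrix.mul_apply]
  apply Finset.sum_eq_zero
  intro l _
  rw [Matrix.mul_diagonal, Matrix.transpose_apply]
  rcases lt_trichotomy l k with hl | rfl | hl
  · have h1 : (1 : Matrix (Fin p) (Fin p) ℝ) k l = 0 := Matrix.one_apply_ne (ne_of_gt hl)
    have h2 : B k l = 0 := hB k l (by omega)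
    simp [Matrix.sub_apply, h1, h2]
  · have h1 : (1 : Matrix (Fin p) (Fin p) ℝ) j l = 0 := Matrix.one_apply_ne (ne_of_lt hjk)
    simp [Matrix.sub_apply, h1, hedge]
  · have h1 : (1 : Matrix (Fin p) (Fin p) ℝ) j l = 0 := Matrix.one_apply_ne (by omega)
    have h2 : (1 : Matrix (Fin p) (Fin p) ℝ) k l = 0 := Matrix.one_apply_ne (ne_of_lt hl)
    rcases hchild l hl with h3 | h3 <;> simp [Matrix.sub_apply, h1, h2, h3]
end

section
/- Let U denote the set of p×p matrices that are permutation similar to strictly upper triangular matrices. Given B₀ ∈ U and diagonal positive definite Ω₀, let Σ = (I−B₀)⁻ᵀ Ω₀ (I−B₀)⁻¹ and define score_{Ω₀}(B) = tr(Ω₀^{-1/2} (I−B)ᵀ Σ (I−B) Ω₀^{-1/2}). Then for every B ∈ U, score_{Ω₀}(B) ≥ p, with equality if and only if B = B₀. -/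
open Matrix

/-- `B` is permutation similar to a strictly upper triangular matrix. -/
def PermStrictUpper {p : ℕ} (B : Matrix (Fin p) (Fin p) ℝ) : Prop :=
  ∃ σ : Equiv.Perm (Fin p), ∀ i j : Fin p, ¬ i < j → B (σ i) (σ j) = 0

/-- The weighted squared-ℓ₂ score
`score d S B = tr (Ω^{-1/2} (I-B)ᵀ S (I-B) Ω^{-1/2})` with `Ω = diagonal d`. -/
noncomputable def score {p : ℕ} (d : Fin p → ℝ) (S B : Matrix (Fin p) (Fin p) ℝ) : ℝ :=
  (Matrix.diagonal (fun j => (Real.sqrt (d j))⁻¹) * (1 - B)ᵀ * S * (1 - B) *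
    Matrix.diagonal (fun j => (Real.sqrt (d j))⁻¹)).trace

lemma aux_amgm {p : ℕ} (lam : Fin p → ℝ) (h0 : ∀ i, 0 ≤ lam i)
    (hprod : ∏ i, lam i = 1) :
    (p : ℝ) ≤ ∑ i, lam i ∧ ((∑ i, lam i) = (p : ℝ) ↔ ∀ i, lam i = 1) := by
  have hpos : ∀ i, 0 < lam i := by
    intro i
    rcases (h0 i).lt_or_eq with h | h
    · exact h
    · exfalso
      have : ∏ j, lam j = 0 := Finset.prod_eq_zero (Finset.mem_univ i) h.symm
      rw [hprod] at this; norm_num at this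
  have hlog : ∑ i, Real.log (lam i) = 0 := by
    rw [← Real.log_prod (fun i _ => (hpos i).ne'), hprod, Real.log_one]
  have hterm : ∀ i, 0 ≤ lam i - 1 - Real.log (lam i) := by
    intro i
    have := Real.log_le_sub_one_of_pos (hpos i)
    linarith
  have hsum : 0 ≤ ∑ i, (lam i - 1 - Real.log (lam i)) :=
    Finset.sum_nonneg fun i _ => hterm i
  have hexpand : ∑ i, (lam i - 1 - Real.log (lam i))
      = (∑ i, lam i) - p := by
    rw [Finset.sum_sub_distrib, Finset.sum_sub_distrib, hlog]
    simp [Finset.card_univ]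
  constructor
  · linarith [hexpand ▸ hsum]
  · constructor
    · intro heq
      have hzero : ∑ i, (lam i - 1 - Real.log (lam i)) = 0 := by rw [hexpand, heq]; ring
      have hall := (Finset.sum_eq_zero_iff_of_nonneg (fun i _ => hterm i)).mp hzero
      intro i
      by_contra hne
      have := Real.log_lt_sub_one_of_pos (hpos i) hne
      have h2 := hall i (Finset.mem_univ i)
      linarith
    · intro h; simp [h, Finset.card_univ]

lemma aux_det {p : ℕ} {B : Matrix (Fin p) (Fin p) ℝ} (hB : PermStrictUpper B) :
    (1 - B).det = 1 := by
  obtain ⟨σ, hB⟩ := hB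
  rw [← Matrix.det_submatrix_equiv_self σ (1 - B)]
  have htri : ((1 - B).submatrix σ σ).BlockTriangular id := by
    intro i j hij
    have hij' : (j : Fin p) < i := hij
    simp only [Matrix.submatrix_apply, Matrix.sub_apply]
    rw [Matrix.one_apply_ne (σ.injective.ne hij'.ne'), hB i j (not_lt.mpr hij'.le), sub_zero]
  rw [Matrix.det_of_upperTriangular htri]
  apply Finset.prod_eq_one
  intro i _
  simp [Matrix.submatrix_apply, Matrix.sub_apply, Matrix.one_apply,
    hB i i (lt_irrefl i)]

lemma aux_diag_zero {p : ℕ} {B : Matrix (Fin p) (Fin p) ℝ} (hB : PermStrictUpper B)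
    (m : Fin p) : B m m = 0 := by
  obtain ⟨σ, hB⟩ := hB
  have := hB (σ.symm m) (σ.symm m) (lt_irrefl _)
  simpa using this

lemma aux_submatrix {p : ℕ} {B : Matrix (Fin (p+1)) (Fin (p+1)) ℝ}
    (hB : PermStrictUpper B) (j : Fin (p+1)) :
    PermStrictUpper (B.submatrix j.succAbove j.succAbove) := by
  obtain ⟨σ, hB⟩ := hB
  set s : Finset (Fin (p+1)) := Finset.univ.filter (fun i => σ i ≠ j) with hs
  have hcard : s.card = p := by
    have : s = Finset.univ.erase (σ.symm j) := by
      ext i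
      simp only [hs, Finset.mem_filter, Finset.mem_univ, true_and, Finset.mem_erase,
        and_true, ne_eq]
      rw [← Equiv.eq_symm_apply]
    rw [this, Finset.card_erase_of_mem (Finset.mem_univ _), Finset.card_univ,
      Fintype.card_fin]
    omega
  set e := s.orderIsoOfFin hcard with he
  have hne : ∀ a : Fin p, σ (e a : Fin (p+1)) ≠ j := by
    intro a
    exact (Finset.mem_filter.mp (e a).2).2
  choose f hf using fun a => Fin.exists_succAbove_eq (hne a)
  have hfinj : Function.Injective f := by
    intro a b hab
    have : σ (e a : Fin (p+1)) = σ (e b : Fin (p+1)) := by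
      rw [← hf a, ← hf b, hab]
    have := σ.injective this
    exact e.injective (Subtype.ext this)
  obtain ⟨σ', hσ'⟩ : ∃ σ' : Equiv.Perm (Fin p), ∀ a, σ' a = f a :=
    ⟨Equiv.ofBijective f (Finite.injective_iff_bijective.mp hfinj), fun a => rfl⟩
  refine ⟨σ', fun a b hab => ?_⟩
  simp only [Matrix.submatrix_apply, hσ', hf]
  apply hB
  intro hlt
  exact hab (e.lt_iff_lt.mp (Subtype.coe_lt_coe.mp hlt))

lemma aux_entry {p : ℕ} (B : Matrix (Fin p) (Fin p) ℝ) (c : Fin p → ℝ) (k l : Fin p) :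
    (((1 - B) * Matrix.diagonal c * (1 - B)ᵀ : Matrix (Fin p) (Fin p) ℝ)) k l
      = ∑ m, (1 - B) k m * c m * (1 - B) l m := by
  rw [Matrix.mul_apply]
  refine Finset.sum_congr rfl fun m _ => ?_
  rw [Matrix.mul_diagonal, Matrix.transpose_apply]

lemma aux_uniq : ∀ (p : ℕ) (c : Fin p → ℝ), (∀ j, 0 < c j) →
    ∀ B B₀ : Matrix (Fin p) (Fin p) ℝ, PermStrictUpper B → PermStrictUpper B₀ →
    (1 - B) * Matrix.diagonal c * (1 - B)ᵀ = (1 - B₀) * Matrix.diagonal c * (1 - B₀)ᵀ →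
    B = B₀ := by
  intro p
  induction p with
  | zero =>
    intro c _ B B₀ _ _ _
    ext i k; exact i.elim0
  | succ p ih =>
    intro c hc B B₀ hB hB₀ hM
    obtain ⟨σ, hBs⟩ := id hB
    set j := σ (Fin.last p) with hj
    set ι := j.succAbove with hι
    have hM' : ∀ k l, ∑ m, (1 - B) k m * c m * (1 - B) l m
        = ∑ m, (1 - B₀) k m * c m * (1 - B₀) l m := by
      intro k l
      rw [← aux_entry, ← aux_entry, hM]
    have hrowB : ∀ k, B j k = 0 := by
      intro k
      have := hBs (Fin.last p) (σ.symm k) (Fin.not_lt.mpr (Fin.le_last _))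
      simpa [hj] using this
    have h1B : ∀ m, (1 - B) j m = if j = m then (1:ℝ) else 0 := by
      intro m
      simp [Matrix.sub_apply, Matrix.one_apply, hrowB]
    have hjj : ∑ m, (1 - B) j m * c m * (1 - B) j m = c j := by
      simp only [h1B]
      rw [Finset.sum_eq_single j]
      · simp
      · intro b _ hbj
        simp [Ne.symm hbj]
      · simp
    have hrowB₀ : ∀ k, B₀ j k = 0 := by
      have hdz : B₀ j j = 0 := aux_diag_zero hB₀ j
      have heq : ∑ m, (1 - B₀) j m * c m * (1 - B₀) j m = c j := by
        rw [← hM' j j, hjj]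
      rw [Fin.sum_univ_succAbove (fun m => (1 - B₀) j m * c m * (1 - B₀) j m) j] at heq
      have hfj : (1 - B₀) j j = 1 := by
        simp [Matrix.sub_apply, Matrix.one_apply, hdz]
      have hterm : ∀ i : Fin p, (1 - B₀) j (ι i) = - B₀ j (ι i) := by
        intro i
        simp [Matrix.sub_apply, Matrix.one_apply_ne (show j ≠ ι i from Fin.ne_succAbove j i)]
      have hzero : ∑ i : Fin p, c (ι i) * (B₀ j (ι i))^2 = 0 := by
        have : ∑ i : Fin p,
            (1 - B₀) j (ι i) * c (ι i) * (1 - B₀) j (ι i)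
            = ∑ i : Fin p, c (ι i) * (B₀ j (ι i))^2 := by
          refine Finset.sum_congr rfl fun i _ => ?_
          rw [hterm i]; ring
        rw [hfj] at heq
        rw [← this]
        linarith [heq]
      have hall := (Finset.sum_eq_zero_iff_of_nonneg
        (fun i _ => mul_nonneg (hc _).le (sq_nonneg _))).mp hzero
      intro k
      by_cases hk : k = j
      · rw [hk]; exact hdz
      · obtain ⟨i, rfl⟩ := Fin.exists_succAbove_eq hk
        have h3 := hall i (Finset.mem_univ i)
        rcases mul_eq_zero.mp h3 with h | h
        · exact absurd h (hc (ι i)).ne'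
        · exact pow_eq_zero_iff two_ne_zero |>.mp h
    have h1B₀ : ∀ m, (1 - B₀) j m = if j = m then (1:ℝ) else 0 := by
      intro m
      simp [Matrix.sub_apply, Matrix.one_apply, hrowB₀]
    have hcol : ∀ k, B k j = B₀ k j := by
      intro k
      have hL : ∑ m, (1 - B) k m * c m * (1 - B) j m = (1 - B) k j * c j := by
        simp only [h1B]
        rw [Finset.sum_eq_single j]
        · simp
        · intro b _ hbj; simp [Ne.symm hbj]
        · simp
      have hR : ∑ m, (1 - B₀) k m * c m * (1 - B₀) j m = (1 - B₀) k j * c j := by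
        simp only [h1B₀]
        rw [Finset.sum_eq_single j]
        · simp
        · intro b _ hbj; simp [Ne.symm hbj]
        · simp
      have := hM' k j
      rw [hL, hR] at this
      have hcj := (hc j).ne'
      have h2 := mul_right_cancel₀ hcj this
      simpa [Matrix.sub_apply] using h2
    have hcol' : ∀ k, (1 - B) k j = (1 - B₀) k j := by
      intro k
      simp [Matrix.sub_apply, hcol k]
    have hsub : ∀ (X : Matrix (Fin (p+1)) (Fin (p+1)) ℝ) (k m : Fin p),
        (1 - X.submatrix ι ι) k m = (1 - X) (ι k) (ι m) := by
      intro X k m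
      simp only [Matrix.sub_apply, Matrix.submatrix_apply, Matrix.one_apply,
        (Fin.succAbove_right_injective (p := j)).eq_iff, hι, Fin.succAbove_right_inj]
    have h' : (1 - B.submatrix ι ι) * Matrix.diagonal (c ∘ ι) * (1 - B.submatrix ι ι)ᵀ
        = (1 - B₀.submatrix ι ι) * Matrix.diagonal (c ∘ ι) * (1 - B₀.submatrix ι ι)ᵀ := by
      ext k l
      rw [aux_entry, aux_entry]
      have hfull := hM' (ι k) (ι l)
      rw [Fin.sum_univ_succAbove (fun m => (1 - B) (ι k) m * c m * (1 - B) (ι l) m) j,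
        Fin.sum_univ_succAbove (fun m => (1 - B₀) (ι k) m * c m * (1 - B₀) (ι l) m) j,
        hcol' (ι k), hcol' (ι l)] at hfull
      have hfull2 := add_left_cancel hfull
      calc ∑ m, (1 - B.submatrix ι ι) k m * (c ∘ ι) m * (1 - B.submatrix ι ι) l m
          = ∑ m, (1 - B) (ι k) (ι m) * c (ι m) * (1 - B) (ι l) (ι m) := by
            refine Finset.sum_congr rfl fun m _ => by rw [hsub, hsub]; rfl
        _ = ∑ m, (1 - B₀) (ι k) (ι m) * c (ι m) * (1 - B₀) (ι l) (ι m) := hfull2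
        _ = ∑ m, (1 - B₀.submatrix ι ι) k m * (c ∘ ι) m * (1 - B₀.submatrix ι ι) l m := by
            refine Finset.sum_congr rfl fun m _ => by rw [hsub, hsub]; rfl
    have hind := ih (c ∘ ι) (fun m => hc (ι m)) _ _
      (aux_submatrix hB j) (aux_submatrix hB₀ j) h'
    ext k l
    by_cases hl : l = j
    · rw [hl]; exact hcol k
    · by_cases hk : k = j
      · rw [hk, hrowB, hrowB₀]
      · obtain ⟨k', rfl⟩ := Fin.exists_succAbove_eq hk
        obtain ⟨l', rfl⟩ := Fin.exists_succAbove_eq hl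
        exact congrFun (congrFun hind k') l'


/-- For `B₀` in the class `U` of matrices permutation similar to strictly upper triangular
matrices, diagonal positive definite `Ω₀ = diagonal d`, and `Σ = (I-B₀)⁻ᵀ Ω₀ (I-B₀)⁻¹`,
every `B ∈ U` satisfies `score_{Ω₀}(B) ≥ p`, with equality if and only if `B = B₀`. -/
theorem stmt_8 (p : ℕ) (B₀ : Matrix (Fin p) (Fin p) ℝ) (d : Fin p → ℝ)
    (hd : ∀ j, 0 < d j) (hB₀ : PermStrictUpper B₀)
    (S : Matrix (Fin p) (Fin p) ℝ)
    (hS : S = ((1 - B₀)ᵀ)⁻¹ * Matrix.diagonal d * (1 - B₀)⁻¹) :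
    ∀ B : Matrix (Fin p) (Fin p) ℝ, PermStrictUpper B →
      (p : ℝ) ≤ score d S B ∧ (score d S B = (p : ℝ) ↔ B = B₀) := by
  intro B hB
  have hsqrt : ∀ j, Real.sqrt (d j) ≠ 0 := fun j => (Real.sqrt_pos.mpr (hd j)).ne'
  set L : Matrix (Fin p) (Fin p) ℝ := 1 - B with hL
  set L₀ : Matrix (Fin p) (Fin p) ℝ := 1 - B₀ with hL₀
  set E : Matrix (Fin p) (Fin p) ℝ :=
    Matrix.diagonal (fun j => (Real.sqrt (d j))⁻¹) with hE
  set F : Matrix (Fin p) (Fin p) ℝ :=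
    Matrix.diagonal (fun j => Real.sqrt (d j)) with hF
  have hdL : L.det = 1 := aux_det hB
  have hdL₀ : L₀.det = 1 := aux_det hB₀
  have hUL₀ : IsUnit L₀.det := hdL₀ ▸ isUnit_one
  have hUL₀t : IsUnit (L₀ᵀ).det := by rw [Matrix.det_transpose]; exact hUL₀
  have hFE : F * E = 1 := by
    rw [hF, hE, Matrix.diagonal_mul_diagonal,
      show (fun j => Real.sqrt (d j) * (Real.sqrt (d j))⁻¹) = fun _ => (1:ℝ) from
        funext fun j => mul_inv_cancel₀ (hsqrt j), Matrix.diagonal_one]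
  have hEF : E * F = 1 := by
    rw [hE, hF, Matrix.diagonal_mul_diagonal,
      show (fun j => (Real.sqrt (d j))⁻¹ * Real.sqrt (d j)) = fun _ => (1:ℝ) from
        funext fun j => inv_mul_cancel₀ (hsqrt j), Matrix.diagonal_one]
  have hFF : F * F = Matrix.diagonal d := by
    rw [hF, Matrix.diagonal_mul_diagonal,
      show (fun j => Real.sqrt (d j) * Real.sqrt (d j)) = d from
        funext fun j => Real.mul_self_sqrt (hd j).le]
  have hEt : Eᵀ = E := by rw [hE, Matrix.diagonal_transpose]
  have hFt : Fᵀ = F := by rw [hF, Matrix.diagonal_transpose]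
  set A : Matrix (Fin p) (Fin p) ℝ := F * L₀⁻¹ * L * E with hA
  have hscore : score d S B = (Aᵀ * A).trace := by
    rw [score, hS]
    congr 1
    rw [hA]
    simp only [Matrix.transpose_mul, Matrix.transpose_nonsing_inv, hEt, hFt,
      ← hFF, Matrix.mul_assoc]
    rfl
  have hdetA : A.det = 1 := by
    rw [hA, Matrix.det_mul, Matrix.det_mul, Matrix.det_mul, hdL,
      Matrix.det_nonsing_inv, hdL₀]
    simp only [Ring.inverse_one, mul_one]
    rw [← Matrix.det_mul, hFE, Matrix.det_one]
  set G : Matrix (Fin p) (Fin p) ℝ := Aᵀ * A with hG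
  have hGh : G.IsHermitian := by
    have := Matrix.isHermitian_conjTranspose_mul_self A
    rwa [Matrix.conjTranspose_eq_transpose_of_trivial] at this
  have hGpsd : G.PosSemidef := by
    have := Matrix.posSemidef_conjTranspose_mul_self A
    rwa [Matrix.conjTranspose_eq_transpose_of_trivial] at this
  have hdetG : G.det = 1 := by
    rw [hG, Matrix.det_mul, Matrix.det_transpose, hdetA, mul_one]
  set lam := hGh.eigenvalues with hlam
  set V : Matrix (Fin p) (Fin p) ℝ := (Matrix.IsHermitian.eigenvectorUnitary hGh : Matrix (Fin p) (Fin p) ℝ) with hV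
  have hVV : V * star V = 1 :=
    (Matrix.mem_unitaryGroup_iff).mp (Matrix.IsHermitian.eigenvectorUnitary hGh).2
  have hVV' : star V * V = 1 :=
    (Matrix.mem_unitaryGroup_iff').mp (Matrix.IsHermitian.eigenvectorUnitary hGh).2
  have hspec : G = V * Matrix.diagonal (RCLike.ofReal ∘ lam) * star V :=
    hGh.spectral_theorem
  have htr : G.trace = ∑ i, lam i := by
    rw [hspec, Matrix.trace_mul_comm (V * Matrix.diagonal (RCLike.ofReal ∘ lam)) (star V),
      ← Matrix.mul_assoc, hVV', Matrix.one_mul, Matrix.trace_diagonal]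
    simp
  have hprod : ∏ i, lam i = 1 := by
    have := hGh.det_eq_prod_eigenvalues
    rw [hdetG] at this
    simpa using this.symm
  obtain ⟨hge, hiff⟩ := aux_amgm lam (fun i => hGpsd.eigenvalues_nonneg i) hprod
  constructor
  · rw [hscore, htr]; exact hge
  constructor
  · intro heq
    have hall : ∀ i, lam i = 1 := by
      apply hiff.mp
      rw [← htr, ← hscore, heq]
    have hG1 : G = 1 := by
      rw [hspec]
      rw [show RCLike.ofReal ∘ lam = fun _ => (1:ℝ) from funext fun i => by
        simp [hall i], Matrix.diagonal_one, Matrix.mul_one, hVV]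
    have hAAt : A * Aᵀ = 1 := mul_eq_one_comm.mp hG1
    -- cancellation helpers
    have cEF : ∀ X : Matrix (Fin p) (Fin p) ℝ, E * (F * X) = X := fun X => by
      rw [← Matrix.mul_assoc, hEF, Matrix.one_mul]
    have cFE : ∀ X : Matrix (Fin p) (Fin p) ℝ, F * (E * X) = X := fun X => by
      rw [← Matrix.mul_assoc, hFE, Matrix.one_mul]
    have ciL₀ : ∀ X : Matrix (Fin p) (Fin p) ℝ, L₀ * (L₀⁻¹ * X) = X := fun X => by
      rw [← Matrix.mul_assoc, Matrix.mul_nonsing_inv _ hUL₀, Matrix.one_mul]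
    have htL₀ : (L₀ᵀ)⁻¹ * L₀ᵀ = 1 := Matrix.nonsing_inv_mul _ hUL₀t
    have h2 : F * (L₀⁻¹ * (L * (E * (E * (Lᵀ * ((L₀ᵀ)⁻¹ * F)))))) = 1 := by
      have := hAAt
      rw [hA] at this
      simpa only [Matrix.transpose_mul, Matrix.transpose_nonsing_inv, hEt, hFt,
        Matrix.mul_assoc] using this
    have h3 := congrArg (fun X : Matrix (Fin p) (Fin p) ℝ => L₀ * (E * X) * (E * L₀ᵀ)) h2
    simp only [cEF, ciL₀, Matrix.mul_one, Matrix.mul_assoc, cFE, htL₀] at h3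
    -- h3 should now be : L * (E * (E * Lᵀ)) = L₀ * (E * (E * L₀ᵀ))
    have hkey : L * (E * E) * Lᵀ = L₀ * (E * E) * L₀ᵀ := by
      simp only [Matrix.mul_assoc]
      exact h3
    have hEE : E * E = Matrix.diagonal (fun j => (Real.sqrt (d j))⁻¹ * (Real.sqrt (d j))⁻¹) := by
      rw [hE, Matrix.diagonal_mul_diagonal]
    rw [hEE] at hkey
    exact aux_uniq p _ (fun j => by have := Real.sqrt_pos.mpr (hd j); positivity) B B₀ hB hB₀ hkey
  · intro heq
    subst heq
    have hA1 : A = 1 := by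
      rw [hA, hL, ← hL₀, Matrix.mul_assoc F L₀⁻¹ L₀, Matrix.nonsing_inv_mul _ hUL₀,
        Matrix.mul_one, hFE]
    rw [hscore, hG, hA1]
    simp [Matrix.trace_one]
end

section
/- Consider the two-variable linear SEM X₁ = ε₁, X₂ = b₀X₁ + ε₂ with var(ε₁) = d₁², var(ε₂) = d₂². For the backward model parametrized by b (X₂ exogenous, X₁ = bX₂ + noise), the weighted score satisfies score_{Ω₀}(B) = 2 + b²b₀² + (b·d₂/d₁ − b₀·d₁/d₂)², which is minimized over b at b = b₀/(b₀² + d₂²/d₁²), and the resulting gap is ξ = min_b{score_{Ω₀}(B)} − 2 = b₀⁴ / (d₂⁴/d₁⁴ + b₀² d₂²/d₁²). -/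
open Matrix

/-- Two-variable SEM `X₁ = ε₁`, `X₂ = b₀ X₁ + ε₂` with error variances `d₁², d₂²`.
For the backward model `B(b)` with single entry `b` in position `(2,1)`, the weighted score is
`2 + b² b₀² + (b d₂/d₁ - b₀ d₁/d₂)²`, minimized at `b* = b₀/(b₀² + d₂²/d₁²)`, and the gap is
`ξ = score(B(b*)) - 2 = b₀⁴ / (d₂⁴/d₁⁴ + b₀² d₂²/d₁²)`. -/
theorem stmt_11 (b₀ d₁ d₂ : ℝ) (hd₁ : 0 < d₁) (hd₂ : 0 < d₂) :
    let B₀ : Matrix (Fin 2) (Fin 2) ℝ := !![0, b₀; 0, 0]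
    let dv : Fin 2 → ℝ := ![d₁ ^ 2, d₂ ^ 2]
    let S : Matrix (Fin 2) (Fin 2) ℝ := ((1 - B₀)ᵀ)⁻¹ * Matrix.diagonal dv * (1 - B₀)⁻¹
    let Bb : ℝ → Matrix (Fin 2) (Fin 2) ℝ := fun b => !![0, 0; b, 0]
    let bstar : ℝ := b₀ / (b₀ ^ 2 + d₂ ^ 2 / d₁ ^ 2)
    (∀ b : ℝ,
      score dv S (Bb b) = 2 + b ^ 2 * b₀ ^ 2 + (b * d₂ / d₁ - b₀ * d₁ / d₂) ^ 2) ∧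
    (∀ b : ℝ, score dv S (Bb bstar) ≤ score dv S (Bb b)) ∧
    score dv S (Bb bstar) - 2 = b₀ ^ 4 / (d₂ ^ 4 / d₁ ^ 4 + b₀ ^ 2 * d₂ ^ 2 / d₁ ^ 2) := by
  intro B₀ dv S Bb bstar
  have hinv : (1 - B₀)⁻¹ = !![1, b₀; 0, 1] := by
    apply inv_eq_right_inv
    have h : (1 : Matrix (Fin 2) (Fin 2) ℝ) - B₀ = !![1, -b₀; 0, 1] := by
      show (1 : Matrix (Fin 2) (Fin 2) ℝ) - !![0, b₀; 0, 0] = _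
      rw [Matrix.one_fin_two]
      ext i j; fin_cases i <;> fin_cases j <;> simp
    rw [h, Matrix.mul_fin_two, Matrix.one_fin_two]; norm_num
  have hdiag : Matrix.diagonal dv = !![d₁ ^ 2, 0; 0, d₂ ^ 2] := by
    ext i j; fin_cases i <;> fin_cases j <;>
      simp [Matrix.diagonal, dv]
  have hS : S = !![d₁ ^ 2, d₁ ^ 2 * b₀; b₀ * d₁ ^ 2, b₀ ^ 2 * d₁ ^ 2 + d₂ ^ 2] := by
    show ((1 - B₀)ᵀ)⁻¹ * Matrix.diagonal dv * (1 - B₀)⁻¹ = _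
    have hTinv : ((1 - B₀)ᵀ)⁻¹ = !![1, 0; b₀, 1] := by
      rw [← Matrix.transpose_nonsing_inv, hinv]
      ext i j; fin_cases i <;> fin_cases j <;> simp
    rw [hTinv, hdiag, Matrix.mul_fin_two, hinv, Matrix.mul_fin_two]
    ext i j; fin_cases i <;> fin_cases j <;> simp <;> ring
  have hs1 : Real.sqrt (d₁ ^ 2) = d₁ := by
    rw [Real.sqrt_sq hd₁.le]
  have hs2 : Real.sqrt (d₂ ^ 2) = d₂ := by
    rw [Real.sqrt_sq hd₂.le]
  have key : ∀ b : ℝ,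
      score dv S (Bb b) = 2 + b ^ 2 * b₀ ^ 2 + (b * d₂ / d₁ - b₀ * d₁ / d₂) ^ 2 := by
    intro b
    have hone : (1 : Matrix (Fin 2) (Fin 2) ℝ) - Bb b = !![1, 0; -b, 1] := by
      show (1 : Matrix (Fin 2) (Fin 2) ℝ) - !![0, 0; b, 0] = _
      rw [Matrix.one_fin_two]
      ext i j; fin_cases i <;> fin_cases j <;> simp
    have hdi : Matrix.diagonal (fun j => (Real.sqrt (dv j))⁻¹)
        = !![d₁⁻¹, 0; 0, d₂⁻¹] := by
      ext i j; fin_cases i <;> fin_cases j <;>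
        simp [Matrix.diagonal, dv, hs1, hs2]
    have honeT : (!![1, 0; -b, 1] : Matrix (Fin 2) (Fin 2) ℝ)ᵀ = !![1, -b; 0, 1] := by
      ext i j; fin_cases i <;> fin_cases j <;> simp
    rw [score, hS, hone, hdi, honeT]
    rw [Matrix.mul_fin_two, Matrix.mul_fin_two, Matrix.mul_fin_two, Matrix.mul_fin_two,
      Matrix.trace_fin_two]
    simp only [Matrix.cons_val', Matrix.cons_val_zero, Matrix.cons_val_one, Matrix.head_cons,
      Matrix.head_fin_const, Matrix.empty_val', Matrix.cons_val_fin_one, Matrix.of_apply]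
    field_simp
    ring
  refine ⟨key, ?_, ?_⟩
  · intro b
    rw [key, key]
    have h1 : d₁ ≠ 0 := hd₁.ne'
    have h2 : d₂ ≠ 0 := hd₂.ne'
    have hpos : 0 < b₀ ^ 2 + d₂ ^ 2 / d₁ ^ 2 := by positivity
    have hb : bstar = b₀ / (b₀ ^ 2 + d₂ ^ 2 / d₁ ^ 2) := rfl
    have expand : ∀ c : ℝ, 2 + c ^ 2 * b₀ ^ 2 + (c * d₂ / d₁ - b₀ * d₁ / d₂) ^ 2
        = (b₀ ^ 2 + d₂ ^ 2 / d₁ ^ 2) * (c - bstar) ^ 2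
          + (2 + b₀ ^ 2 * d₁ ^ 2 / d₂ ^ 2 - b₀ ^ 2 / (b₀ ^ 2 + d₂ ^ 2 / d₁ ^ 2)) := by
      intro c
      rw [hb]
      field_simp
      ring
    rw [expand b, expand bstar]
    nlinarith [sq_nonneg (b - bstar), hpos.le, mul_nonneg hpos.le (sq_nonneg (b - bstar))]
  · rw [key]
    have h1 : d₁ ≠ 0 := hd₁.ne'
    have h2 : d₂ ≠ 0 := hd₂.ne'
    have hb : bstar = b₀ / (b₀ ^ 2 + d₂ ^ 2 / d₁ ^ 2) := rfl
    have hpos : (0:ℝ) < b₀ ^ 2 + d₂ ^ 2 / d₁ ^ 2 := by positivity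
    have hpos2 : (0:ℝ) < d₂ ^ 4 / d₁ ^ 4 + b₀ ^ 2 * d₂ ^ 2 / d₁ ^ 2 := by positivity
    rw [hb]
    field_simp
    ring
end

section
/- In the two-variable SEM with true autoregression matrix B₀ (entry b₀ in position (1,2)) and Ω₀ = diag(d₁², d₂²), set r = d₂/d₁. If b₀² ≥ r²((r²−1)+√(r⁴−1)) when r ≥ 1, or b₀² ≥ (1−r²)+√(1−r⁴) when r ≤ 1, then B₀ is the unique minimizer of the unweighted score score_I(B) = tr((I−B)ᵀΣ(I−B)) over all matrices B that are permutation similar to strictly upper triangular 2×2 matrices. -/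
open Matrix

/-- Two-variable SEM with true autoregression matrix `B₀` (entry `b₀` in position `(1,2)`),
`Ω₀ = diag(d₁², d₂²)`, `r = d₂/d₁`. If `b₀² ≥ r²((r²-1) + √(r⁴-1))` when `r ≥ 1`, or
`b₀² ≥ (1-r²) + √(1-r⁴)` when `r ≤ 1`, then `B₀` is the unique minimizer of the unweighted
score `tr ((I-B)ᵀ Σ (I-B))` over matrices permutation similar to strictly upper triangular
`2 × 2` matrices. -/
theorem stmt_12 (b₀ d₁ d₂ : ℝ) (hd₁ : 0 < d₁) (hd₂ : 0 < d₂)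
    (hcond₁ : 1 ≤ d₂ / d₁ →
      (d₂ / d₁) ^ 2 * (((d₂ / d₁) ^ 2 - 1) + Real.sqrt ((d₂ / d₁) ^ 4 - 1)) ≤ b₀ ^ 2)
    (hcond₂ : d₂ / d₁ ≤ 1 →
      (1 - (d₂ / d₁) ^ 2) + Real.sqrt (1 - (d₂ / d₁) ^ 4) ≤ b₀ ^ 2) :
    let B₀ : Matrix (Fin 2) (Fin 2) ℝ := !![0, b₀; 0, 0]
    let S : Matrix (Fin 2) (Fin 2) ℝ :=
      ((1 - B₀)ᵀ)⁻¹ * Matrix.diagonal ![d₁ ^ 2, d₂ ^ 2] * (1 - B₀)⁻¹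
    ∀ B : Matrix (Fin 2) (Fin 2) ℝ, PermStrictUpper B → B ≠ B₀ →
      ((1 - B₀)ᵀ * S * (1 - B₀)).trace < ((1 - B)ᵀ * S * (1 - B)).trace := by
  intro B₀ S B hB hne
  -- key inequality: b₀ ≠ 0 → d₁² < d₁²b₀² + d₂²
  have key : b₀ ≠ 0 → d₁ ^ 2 < d₁ ^ 2 * b₀ ^ 2 + d₂ ^ 2 := by
    intro hb
    have hb2 : 0 < d₁ ^ 2 * b₀ ^ 2 := by positivity
    rcases le_total d₁ d₂ with h | h
    · have h2 : d₁ ^ 2 ≤ d₂ ^ 2 := by nlinarith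
      linarith
    · have hr : d₂ / d₁ ≤ 1 := by
        rw [div_le_one hd₁]; exact h
      have h2 := hcond₂ hr
      rcases lt_or_eq_of_le h with hlt | heq
      · have hr1 : d₂ / d₁ < 1 := by rw [div_lt_one hd₁]; exact hlt
        have h0 : 0 < d₂ / d₁ := by positivity
        have hr4 : 0 < 1 - (d₂ / d₁) ^ 4 := by
          have := pow_lt_one₀ h0.le hr1 (n := 4) (by norm_num)
          linarith
        have hsq : 0 < Real.sqrt (1 - (d₂ / d₁) ^ 4) := Real.sqrt_pos.mpr hr4
        have hb2' : 1 - (d₂ / d₁) ^ 2 < b₀ ^ 2 := by linarith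
        have hdd : (d₂ / d₁) ^ 2 = d₂ ^ 2 / d₁ ^ 2 := by ring
        rw [hdd] at hb2'
        have h1 : d₁ ^ 2 * (1 - d₂ ^ 2 / d₁ ^ 2) < d₁ ^ 2 * b₀ ^ 2 :=
          (mul_lt_mul_iff_right₀ (by positivity)).mpr hb2'
        have h3 : d₁ ^ 2 * (1 - d₂ ^ 2 / d₁ ^ 2) = d₁ ^ 2 - d₂ ^ 2 := by
          field_simp
        linarith
      · subst heq; linarith
  -- explicit matrices
  have hone : (1 : Matrix (Fin 2) (Fin 2) ℝ) - B₀ = !![1, -b₀; 0, 1] := by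
    ext i j
    fin_cases i <;> fin_cases j <;>
      simp [B₀, Matrix.sub_apply, Matrix.one_apply]
  have hinv : (1 - B₀)⁻¹ = !![1, b₀; 0, 1] := by
    apply inv_eq_right_inv
    rw [hone]
    ext i j
    fin_cases i <;> fin_cases j <;>
      simp [Matrix.mul_apply, Fin.sum_univ_two, Matrix.one_apply]
  have hinvT : ((1 - B₀)ᵀ)⁻¹ = !![1, 0; b₀, 1] := by
    rw [← Matrix.transpose_nonsing_inv, hinv]
    ext i j
    fin_cases i <;> fin_cases j <;> simp
  have hdiag : (Matrix.diagonal ![d₁ ^ 2, d₂ ^ 2] : Matrix (Fin 2) (Fin 2) ℝ)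
      = !![d₁ ^ 2, 0; 0, d₂ ^ 2] := by
    ext i j; fin_cases i <;> fin_cases j <;> simp
  have hS : S = !![d₁ ^ 2, d₁ ^ 2 * b₀; d₁ ^ 2 * b₀, d₁ ^ 2 * b₀ ^ 2 + d₂ ^ 2] := by
    show ((1 - B₀)ᵀ)⁻¹ * Matrix.diagonal ![d₁ ^ 2, d₂ ^ 2] * (1 - B₀)⁻¹ = _
    rw [hinv, hinvT, hdiag]
    ext i j
    fin_cases i <;> fin_cases j <;>
      simp [Matrix.mul_apply, Fin.sum_univ_two] <;> ring
  have honeT : ((1 : Matrix (Fin 2) (Fin 2) ℝ) - B₀)ᵀ = !![1, 0; -b₀, 1] := by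
    rw [hone]; ext i j; fin_cases i <;> fin_cases j <;> simp
  -- LHS trace
  have hLHS : ((1 - B₀)ᵀ * S * (1 - B₀)).trace = d₁ ^ 2 + d₂ ^ 2 := by
    rw [honeT, hone, hS]
    simp [Matrix.trace_fin_two, Matrix.mul_apply, Fin.sum_univ_two]
    ring
  rw [hLHS]
  -- classify B
  obtain ⟨σ, hσ⟩ := hB
  have two : ∀ x : Fin 2, x = 0 ∨ x = 1 := by decide
  have h00 := hσ 0 0 (by decide)
  have h11 := hσ 1 1 (by decide)
  have h10 := hσ 1 0 (by decide)
  have hne10 : σ 1 ≠ σ 0 := fun h => absurd (σ.injective h) (by decide)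
  rcases two (σ 0) with h0 | h0
  · -- σ = id, B = !![0, β; 0, 0]
    have h1 : σ 1 = 1 := by
      rcases two (σ 1) with h1 | h1
      · exact absurd (h1.trans h0.symm) hne10
      · exact h1
    rw [h0] at h00
    rw [h1] at h11
    rw [h0, h1] at h10
    have hβ : B 0 1 ≠ b₀ := by
      intro hc
      apply hne
      ext i j
      fin_cases i <;> fin_cases j <;> simp [B₀, h00, h11, h10, hc]
    have hsub : (1 : Matrix (Fin 2) (Fin 2) ℝ) - B = !![1, -(B 0 1); 0, 1] := by
      ext i j
      fin_cases i <;> fin_cases j <;>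
        simp [Matrix.sub_apply, Matrix.one_apply, h00, h11, h10]
    have hsubT : ((1 : Matrix (Fin 2) (Fin 2) ℝ) - B)ᵀ = !![1, 0; -(B 0 1), 1] := by
      rw [hsub]; ext i j; fin_cases i <;> fin_cases j <;> simp
    rw [hsubT, hsub, hS]
    simp [Matrix.trace_fin_two, Matrix.mul_apply, Fin.sum_univ_two]
    have hne0 : B 0 1 - b₀ ≠ 0 := sub_ne_zero_of_ne hβ
    nlinarith [sq_pos_of_ne_zero hne0, sq_nonneg d₁, mul_pos (mul_pos hd₁ hd₁) (sq_pos_of_ne_zero hne0)]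
  · -- σ = swap, B = !![0, 0; γ, 0]
    have h1 : σ 1 = 0 := by
      rcases two (σ 1) with h1 | h1
      · exact h1
      · exact absurd (h1.trans h0.symm) hne10
    rw [h0] at h00
    rw [h1] at h11
    rw [h0, h1] at h10
    have hsub : (1 : Matrix (Fin 2) (Fin 2) ℝ) - B = !![1, 0; -(B 1 0), 1] := by
      ext i j
      fin_cases i <;> fin_cases j <;>
        simp [Matrix.sub_apply, Matrix.one_apply, h00, h11, h10]
    have hsubT : ((1 : Matrix (Fin 2) (Fin 2) ℝ) - B)ᵀ = !![1, -(B 1 0); 0, 1] := by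
      rw [hsub]; ext i j; fin_cases i <;> fin_cases j <;> simp
    rw [hsubT, hsub, hS]
    simp [Matrix.trace_fin_two, Matrix.mul_apply, Fin.sum_univ_two]
    by_cases hb : b₀ = 0
    · have hγ : B 1 0 ≠ 0 := by
        intro hc
        apply hne
        ext i j
        fin_cases i <;> fin_cases j <;> simp [B₀, h00, h11, h10, hc, hb]
      subst hb
      nlinarith [sq_pos_of_ne_zero hγ, mul_pos (mul_pos hd₂ hd₂) (sq_pos_of_ne_zero hγ)]
    · have hk := key hb
      nlinarith [sq_nonneg (B 1 0 * (d₁ ^ 2 * b₀ ^ 2 + d₂ ^ 2) - d₁ ^ 2 * b₀),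
        mul_pos (sq_pos_of_ne_zero hb) (sub_pos.mpr hk),
        mul_pos (mul_pos hd₁ hd₁) (mul_pos (sq_pos_of_ne_zero hb) (sub_pos.mpr hk))]
end

section
/- Under the linear SEM with true matrices (B₀, Ω₀), let ξ = min{score_{Ω₀}(B) : B ∈ U_{G} for some DAG G not containing G₀} − p > 0 be the gap, and let a_max, a_min be the extreme eigenvalues of Ω₀Ω₁⁻¹ for a diagonal weight matrix Ω₁. If a_max/a_min ≤ 1 + ξ/p, then B₀ minimizes score_{Ω₁}(B) over all matrices B permutation similar to strictly upper triangular matrices; if the inequality is strict, B₀ is the unique minimizer. -/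
open Matrix

namespace StmtAux

open Finset

variable {p : ℕ}

lemma diag_zero {B : Matrix (Fin p) (Fin p) ℝ} {σ : Equiv.Perm (Fin p)}
    (h : ∀ i j : Fin p, ¬ i < j → B (σ i) (σ j) = 0) (x : Fin p) : B x x = 0 := by
  have := h (σ.symm x) (σ.symm x) (lt_irrefl _)
  simpa using this

lemma blockTri {B : Matrix (Fin p) (Fin p) ℝ} {σ : Equiv.Perm (Fin p)}
    (h : ∀ i j : Fin p, ¬ i < j → B (σ i) (σ j) = 0) :
    (1 - B).BlockTriangular ⇑σ.symm := by
  intro x y hxy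
  have hx : x ≠ y := by rintro rfl; exact lt_irrefl _ hxy
  have hB : B x y = 0 := by
    have := h (σ.symm x) (σ.symm y) (not_lt.2 hxy.le)
    simpa using this
  simp [Matrix.sub_apply, Matrix.one_apply_ne hx, hB]

lemma one_sub_diag {B : Matrix (Fin p) (Fin p) ℝ} {σ : Equiv.Perm (Fin p)}
    (h : ∀ i j : Fin p, ¬ i < j → B (σ i) (σ j) = 0) (x : Fin p) :
    (1 - B) x x = 1 := by
  simp [Matrix.sub_apply, diag_zero h x]

lemma det_one_sub {B : Matrix (Fin p) (Fin p) ℝ} (h : PermStrictUpper B) :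
    (1 - B).det = 1 := by
  obtain ⟨σ, h⟩ := h
  rw [← Matrix.det_submatrix_equiv_self σ (1 - B)]
  rw [Matrix.det_of_upperTriangular]
  · refine Finset.prod_eq_one fun i _ => ?_
    exact one_sub_diag h (σ i)
  · intro i j hij
    have hne : σ i ≠ σ j := fun he => hij.ne' (σ.injective he)
    have hB : B (σ i) (σ j) = 0 := h i j (not_lt.2 hij.le)
    simp [Matrix.submatrix_apply, Matrix.sub_apply, Matrix.one_apply_ne hne, hB]

lemma diag_mul {b : Fin p → Fin p} (hb : Function.Injective b)
    {M N : Matrix (Fin p) (Fin p) ℝ} (hM : M.BlockTriangular b) (hN : N.BlockTriangular b)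
    (x : Fin p) : (M * N) x x = M x x * N x x := by
  rw [Matrix.mul_apply]
  apply Finset.sum_eq_single x
  · intro y _ hyx
    rcases lt_or_ge (b y) (b x) with h | h
    · rw [hM h, zero_mul]
    · have hlt : b x < b y := lt_of_le_of_ne h fun he => hyx (hb he.symm)
      rw [hN hlt, mul_zero]
  · intro h; exact absurd (Finset.mem_univ x) h

lemma inv_blockTri_diag {b : Fin p → Fin p} (hb : Function.Injective b)
    {A : Matrix (Fin p) (Fin p) ℝ} (hA : A.BlockTriangular b) (hu : IsUnit A.det)
    (hd : ∀ x, A x x = 1) :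
    A⁻¹.BlockTriangular b ∧ ∀ x, A⁻¹ x x = 1 := by
  haveI := A.invertibleOfIsUnitDet hu
  have htri := Matrix.blockTriangular_inv_of_blockTriangular hA
  refine ⟨htri, fun x => ?_⟩
  have h1 : (A * A⁻¹) x x = 1 := by rw [Matrix.mul_nonsing_inv _ hu]; simp
  rwa [diag_mul hb hA htri x, hd x, one_mul] at h1

lemma score_eq (d : Fin p → ℝ) (hd : ∀ j, 0 < d j) (S B : Matrix (Fin p) (Fin p) ℝ) :
    score d S B = ∑ j, ((1 - B)ᵀ * S * (1 - B) : Matrix (Fin p) (Fin p) ℝ) j j * (d j)⁻¹ := by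
  have assoc : Matrix.diagonal (fun j => (Real.sqrt (d j))⁻¹) * (1 - B)ᵀ * S * (1 - B) *
        Matrix.diagonal (fun j => (Real.sqrt (d j))⁻¹)
      = Matrix.diagonal (fun j => (Real.sqrt (d j))⁻¹) * ((1 - B)ᵀ * S * (1 - B)) *
        Matrix.diagonal (fun j => (Real.sqrt (d j))⁻¹) := by
    simp only [Matrix.mul_assoc]
  rw [score, assoc, Matrix.trace]
  refine Finset.sum_congr rfl fun j _ => ?_
  rw [Matrix.diag_apply, Matrix.mul_diagonal, Matrix.diagonal_mul]
  have hs : (Real.sqrt (d j))⁻¹ * (Real.sqrt (d j))⁻¹ = (d j)⁻¹ := by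
    rw [← mul_inv, Real.mul_self_sqrt (hd j).le]
  calc (Real.sqrt (d j))⁻¹ * ((1 - B)ᵀ * S * (1 - B) : Matrix (Fin p) (Fin p) ℝ) j j * (Real.sqrt (d j))⁻¹
      = ((1 - B)ᵀ * S * (1 - B) : Matrix (Fin p) (Fin p) ℝ) j j * ((Real.sqrt (d j))⁻¹ * (Real.sqrt (d j))⁻¹) := by ring
    _ = _ := by rw [hs]

lemma quad_diag (d₀ : Fin p → ℝ) (W : Matrix (Fin p) (Fin p) ℝ) (j : Fin p) :
    (Wᵀ * Matrix.diagonal d₀ * W : Matrix (Fin p) (Fin p) ℝ) j j = ∑ k, d₀ k * (W k j) ^ 2 := by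
  rw [Matrix.mul_assoc, Matrix.mul_apply]
  refine Finset.sum_congr rfl fun k _ => ?_
  rw [Matrix.transpose_apply, Matrix.diagonal_mul]
  ring

end StmtAux

/-- Misspecified-weights theorem. Under the linear SEM with true `(B₀, Ω₀ = diagonal d₀)` and
covariance `Σ = (I-B₀)⁻ᵀ Ω₀ (I-B₀)⁻¹`, suppose `ξ > 0` is a gap such that every `B ∈ U` whose
support does not contain the support of `B₀` (i.e. lying in `U_G` for some DAG `G ⊉ G₀`) has
`score_{Ω₀}(B) ≥ p + ξ`, and let `a_min, a_max` bound the diagonal entries of `Ω₀ Ω₁⁻¹`.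
If `a_max / a_min ≤ 1 + ξ/p`, then `B₀` minimizes `score_{Ω₁}` over `U`; if the inequality is
strict, `B₀` is the unique minimizer. -/
theorem stmt_14 (p : ℕ) (hp : 0 < p)
    (B₀ : Matrix (Fin p) (Fin p) ℝ) (hB₀ : PermStrictUpper B₀)
    (d₀ d₁ : Fin p → ℝ) (hd₀ : ∀ j, 0 < d₀ j) (hd₁ : ∀ j, 0 < d₁ j)
    (S : Matrix (Fin p) (Fin p) ℝ)
    (hS : S = ((1 - B₀)ᵀ)⁻¹ * Matrix.diagonal d₀ * (1 - B₀)⁻¹)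
    (ξ : ℝ) (hξ : 0 < ξ)
    (hgap : ∀ B : Matrix (Fin p) (Fin p) ℝ, PermStrictUpper B →
      (∃ j k : Fin p, B₀ j k ≠ 0 ∧ B j k = 0) → (p : ℝ) + ξ ≤ score d₀ S B)
    (amin amax : ℝ) (hamin : 0 < amin)
    (hmin : ∀ j, amin ≤ d₀ j / d₁ j) (hmax : ∀ j, d₀ j / d₁ j ≤ amax)
    (hratio : amax / amin ≤ 1 + ξ / p) :
    (∀ B : Matrix (Fin p) (Fin p) ℝ, PermStrictUpper B →
      score d₁ S B₀ ≤ score d₁ S B) ∧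
    (amax / amin < 1 + ξ / p →
      ∀ B : Matrix (Fin p) (Fin p) ℝ, PermStrictUpper B → B ≠ B₀ →
        score d₁ S B₀ < score d₁ S B) := by
  have hpne : (p : ℝ) ≠ 0 := Nat.cast_ne_zero.2 hp.ne'
  have hppos : (0:ℝ) < p := Nat.cast_pos.2 hp
  have hdet : (1 - B₀).det = 1 := StmtAux.det_one_sub hB₀
  have hu : IsUnit (1 - B₀).det := by rw [hdet]; exact isUnit_one
  set A : Matrix (Fin p) (Fin p) ℝ := 1 - B₀ with hAdef
  set W : Matrix (Fin p) (Fin p) ℝ → Matrix (Fin p) (Fin p) ℝ :=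
    fun B => A⁻¹ * (1 - B) with hWdef
  have hMW : ∀ B : Matrix (Fin p) (Fin p) ℝ,
      (1 - B)ᵀ * S * (1 - B) = (W B)ᵀ * Matrix.diagonal d₀ * (W B) := by
    intro B
    rw [hS, hWdef]
    simp only [Matrix.transpose_mul, Matrix.transpose_nonsing_inv]
    simp only [Matrix.mul_assoc, hAdef]
  have hscore : ∀ (d : Fin p → ℝ), (∀ j, 0 < d j) → ∀ B : Matrix (Fin p) (Fin p) ℝ,
      score d S B = ∑ j, (∑ k, d₀ k * (W B k j) ^ 2) * (d j)⁻¹ := by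
    intro d hd B
    rw [StmtAux.score_eq d hd S B]
    refine Finset.sum_congr rfl fun j _ => ?_
    rw [hMW B, StmtAux.quad_diag]
  have hW0 : W B₀ = 1 := Matrix.nonsing_inv_mul A hu
  have hsum1 : ∀ j : Fin p, (∑ k, d₀ k * ((1 : Matrix (Fin p) (Fin p) ℝ) k j) ^ 2) = d₀ j := by
    intro j
    rw [Finset.sum_eq_single j]
    · simp
    · intro k _ hkj
      simp [Matrix.one_apply_ne hkj]
    · intro h; exact absurd (Finset.mem_univ j) h
  have hscore0 : score d₁ S B₀ = ∑ j, d₀ j * (d₁ j)⁻¹ := by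
    rw [hscore d₁ hd₁ B₀, hW0]
    exact Finset.sum_congr rfl fun j _ => by rw [hsum1 j]
  have hscore0max : score d₁ S B₀ ≤ (p : ℝ) * amax := by
    rw [hscore0]
    calc ∑ j, d₀ j * (d₁ j)⁻¹ ≤ ∑ _j : Fin p, amax := by
          refine Finset.sum_le_sum fun j _ => ?_
          have := hmax j
          rwa [div_eq_mul_inv] at this
      _ = (p : ℝ) * amax := by
          rw [Finset.sum_const, Finset.card_univ, Fintype.card_fin, nsmul_eq_mul]
  -- gap case lower bound
  have key1 : ∀ B : Matrix (Fin p) (Fin p) ℝ, PermStrictUpper B →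
      ((p : ℝ) + ξ ≤ score d₀ S B) → amin * ((p : ℝ) + ξ) ≤ score d₁ S B := by
    intro B hB hg
    set m : Fin p → ℝ := fun j => ∑ k, d₀ k * (W B k j) ^ 2 with hm
    have hmnn : ∀ j, 0 ≤ m j := fun j =>
      Finset.sum_nonneg fun k _ => mul_nonneg (hd₀ k).le (sq_nonneg _)
    have h0 : score d₀ S B = ∑ j, m j * (d₀ j)⁻¹ := hscore d₀ hd₀ B
    have h1 : score d₁ S B = ∑ j, (m j * (d₀ j)⁻¹) * (d₀ j * (d₁ j)⁻¹) := by
      rw [hscore d₁ hd₁ B]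
      refine Finset.sum_congr rfl fun j _ => ?_
      show m j * (d₁ j)⁻¹ = (m j * (d₀ j)⁻¹) * (d₀ j * (d₁ j)⁻¹)
      have hinv : (d₀ j)⁻¹ * d₀ j = 1 := inv_mul_cancel₀ (hd₀ j).ne'
      calc m j * (d₁ j)⁻¹ = m j * ((d₀ j)⁻¹ * d₀ j) * (d₁ j)⁻¹ := by rw [hinv, mul_one]
        _ = (m j * (d₀ j)⁻¹) * (d₀ j * (d₁ j)⁻¹) := by ring
    calc amin * ((p : ℝ) + ξ) ≤ amin * score d₀ S B := by
          exact mul_le_mul_of_nonneg_left hg hamin.le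
      _ = ∑ j, (m j * (d₀ j)⁻¹) * amin := by
          rw [h0, Finset.mul_sum]
          exact Finset.sum_congr rfl fun j _ => by ring
      _ ≤ ∑ j, (m j * (d₀ j)⁻¹) * (d₀ j * (d₁ j)⁻¹) := by
          refine Finset.sum_le_sum fun j _ => ?_
          refine mul_le_mul_of_nonneg_left ?_ (mul_nonneg (hmnn j) (inv_nonneg.2 (hd₀ j).le))
          have := hmin j
          rwa [div_eq_mul_inv] at this
      _ = score d₁ S B := h1.symm
  have hPA : (p : ℝ) * amax ≤ amin * ((p : ℝ) + ξ) := by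
    have h1 : amax ≤ (1 + ξ / p) * amin := (div_le_iff₀ hamin).1 hratio
    have h2 : (p : ℝ) * ((1 + ξ / p) * amin) = amin * ((p : ℝ) + ξ) := by
      field_simp
    nlinarith
  -- contains case
  have key2 : ∀ (B : Matrix (Fin p) (Fin p) ℝ) (σ : Equiv.Perm (Fin p)),
      (∀ i j : Fin p, ¬ i < j → B (σ i) (σ j) = 0) →
      (∀ i j : Fin p, ¬ i < j → B₀ (σ i) (σ j) = 0) →
      (score d₁ S B₀ ≤ score d₁ S B) ∧ (B ≠ B₀ → score d₁ S B₀ < score d₁ S B) := by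
    intro B σ hBσ hB₀σ
    have hb : Function.Injective (⇑σ.symm) := σ.symm.injective
    have hAtri : A.BlockTriangular ⇑σ.symm := StmtAux.blockTri hB₀σ
    have hBtri : (1 - B).BlockTriangular ⇑σ.symm := StmtAux.blockTri hBσ
    have hAinv := StmtAux.inv_blockTri_diag hb hAtri hu (StmtAux.one_sub_diag hB₀σ)
    have hWtri : (W B).BlockTriangular ⇑σ.symm := hAinv.1.mul hBtri
    have hWdiag : ∀ x, W B x x = 1 := by
      intro x
      show (A⁻¹ * (1 - B)) x x = 1
      rw [StmtAux.diag_mul hb hAinv.1 hBtri x, hAinv.2 x, StmtAux.one_sub_diag hBσ x, one_mul]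
    set m : Fin p → ℝ := fun j => ∑ k, d₀ k * (W B k j) ^ 2 with hm
    have hmge : ∀ j, d₀ j ≤ m j := by
      intro j
      have h := Finset.single_le_sum (f := fun k => d₀ k * (W B k j) ^ 2)
        (fun k _ => mul_nonneg (hd₀ k).le (sq_nonneg _)) (Finset.mem_univ j)
      simp only [hWdiag j, one_pow, mul_one] at h
      exact h
    have hle : score d₁ S B₀ ≤ score d₁ S B := by
      rw [hscore0, hscore d₁ hd₁ B]
      refine Finset.sum_le_sum fun j _ => ?_
      exact mul_le_mul_of_nonneg_right (hmge j) (inv_nonneg.2 (hd₁ j).le)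
    refine ⟨hle, fun hne => ?_⟩
    have hABW : A * W B = 1 - B := by
      show A * (A⁻¹ * (1 - B)) = 1 - B
      rw [← Matrix.mul_assoc, Matrix.mul_nonsing_inv A hu, one_mul]
    have hWne : W B ≠ 1 := by
      intro h
      apply hne
      have h2 : (1 : Matrix (Fin p) (Fin p) ℝ) - B = 1 - B₀ := by
        rw [← hABW, h, mul_one, hAdef]
      exact sub_right_injective h2
    obtain ⟨k, j, hkj⟩ : ∃ k j, W B k j ≠ (1 : Matrix (Fin p) (Fin p) ℝ) k j := by
      by_contra h
      push_neg at h
      exact hWne (Matrix.ext fun k j => h k j)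
    have hkne : k ≠ j := by
      rintro rfl
      exact hkj (by rw [hWdiag k, Matrix.one_apply_eq])
    have hWkj : W B k j ≠ 0 := by
      rwa [Matrix.one_apply_ne hkne] at hkj
    have hmj : d₀ j < m j := by
      have hsub : ({j, k} : Finset (Fin p)) ⊆ Finset.univ := Finset.subset_univ _
      have hsum : ∑ i ∈ ({j, k} : Finset (Fin p)), d₀ i * (W B i j) ^ 2 ≤ m j := by
        refine Finset.sum_le_sum_of_subset_of_nonneg hsub fun i _ _ =>
          mul_nonneg (hd₀ i).le (sq_nonneg _)
      rw [Finset.sum_pair (Ne.symm hkne)] at hsum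
      have hpos : 0 < d₀ k * (W B k j) ^ 2 :=
        mul_pos (hd₀ k) (by rw [pow_two]; exact mul_self_pos.mpr hWkj)
      have : d₀ j + d₀ k * (W B k j) ^ 2 ≤ m j := by
        rwa [hWdiag j, one_pow, mul_one] at hsum
      linarith
    rw [hscore0, hscore d₁ hd₁ B]
    refine Finset.sum_lt_sum (fun i _ => mul_le_mul_of_nonneg_right (hmge i)
      (inv_nonneg.2 (hd₁ i).le)) ⟨j, Finset.mem_univ j, ?_⟩
    exact mul_lt_mul_of_pos_right hmj (inv_pos.2 (hd₁ j))
  constructor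
  · intro B hB
    by_cases hcase : ∃ j k : Fin p, B₀ j k ≠ 0 ∧ B j k = 0
    · have h1 := key1 B hB (hgap B hB hcase)
      linarith
    · push_neg at hcase
      obtain ⟨σ, hσ⟩ := hB
      have hB₀σ : ∀ i j : Fin p, ¬ i < j → B₀ (σ i) (σ j) = 0 := by
        intro i j hij
        by_contra h0
        exact hcase _ _ h0 (hσ i j hij)
      exact (key2 B σ hσ hB₀σ).1
  · intro hstrict B hB hne
    by_cases hcase : ∃ j k : Fin p, B₀ j k ≠ 0 ∧ B j k = 0
    · have h1 := key1 B hB (hgap B hB hcase)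
      have hPA' : (p : ℝ) * amax < amin * ((p : ℝ) + ξ) := by
        have h1' : amax < (1 + ξ / p) * amin := (div_lt_iff₀ hamin).1 hstrict
        have h2 : (p : ℝ) * ((1 + ξ / p) * amin) = amin * ((p : ℝ) + ξ) := by
          field_simp
        nlinarith
      linarith
    · push_neg at hcase
      obtain ⟨σ, hσ⟩ := hB
      have hB₀σ : ∀ i j : Fin p, ¬ i < j → B₀ (σ i) (σ j) = 0 := by
        intro i j hij
        by_contra h0
        exact hcase _ _ h0 (hσ i j hij)
      exact (key2 B σ hσ hB₀σ).2 hne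
end

section
/- Suppose X follows a linear SEM with autoregression matrix B₀ whose DAG is G₀. For any DAG G with G₀ ⊆ G (edge containment) and any diagonal positive definite weight matrix Ω, the minimum of score_Ω(B) over matrices B supported on the edges of G equals score_Ω(B₀), and B₀ is the unique minimizer over that set. -/
open Matrix

/-- Explicit formula for the score with `S = (Pᵀ)⁻¹ diag d₀ P⁻¹`. -/
lemma score_eq {p : ℕ} (d d₀ : Fin p → ℝ) (hd : ∀ j, 0 < d j)
    (P B : Matrix (Fin p) (Fin p) ℝ) :
    score d ((Pᵀ)⁻¹ * Matrix.diagonal d₀ * P⁻¹) B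
      = ∑ j, ∑ i, d₀ i * ((P⁻¹ * (1 - B)) i j) ^ 2 * (d j)⁻¹ := by
  set v : Fin p → ℝ := fun j => (Real.sqrt (d j))⁻¹ with hv
  set A : Matrix (Fin p) (Fin p) ℝ := P⁻¹ * (1 - B) with hA
  have hre : Matrix.diagonal v * (1 - B)ᵀ * ((Pᵀ)⁻¹ * Matrix.diagonal d₀ * P⁻¹) * (1 - B) *
      Matrix.diagonal v
      = Matrix.diagonal v * (Aᵀ * (Matrix.diagonal d₀ * A)) * Matrix.diagonal v := by
    have hAT : Aᵀ = (1 - B)ᵀ * (Pᵀ)⁻¹ := by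
      rw [hA, Matrix.transpose_mul, Matrix.transpose_nonsing_inv]
    rw [hAT, hA]
    noncomm_ring
  rw [score, hre, Matrix.trace]
  refine Finset.sum_congr rfl fun j _ => ?_
  show (Matrix.diagonal v * (Aᵀ * (Matrix.diagonal d₀ * A)) * Matrix.diagonal v) j j = _
  rw [Matrix.mul_diagonal, Matrix.diagonal_mul, Matrix.mul_apply, Finset.mul_sum,
    Finset.sum_mul]
  refine Finset.sum_congr rfl fun i _ => ?_
  simp only [Matrix.transpose_apply, Matrix.diagonal_mul]
  have hvv : v j * v j = (d j)⁻¹ := by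
    rw [hv, ← mul_inv, Real.mul_self_sqrt (hd j).le]
  calc v j * (A i j * (d₀ i * A i j)) * v j = d₀ i * A i j ^ 2 * (v j * v j) := by ring
    _ = d₀ i * A i j ^ 2 * (d j)⁻¹ := by rw [hvv]

/-- Suppose `X` follows a linear SEM with autoregression matrix `B₀` (error variances `d₀`,
covariance `Σ = (I-B₀)⁻ᵀ diagonal d₀ (I-B₀)⁻¹`) whose DAG `G₀` is contained in the DAG `G`
with edge relation `E` (acyclic, witnessed by a topological order `σ`). Then for any diagonal
positive definite weight matrix `Ω = diagonal d`, the matrix `B₀` is the unique minimizer of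
`score_Ω` over the matrices supported on the edges of `G`. -/
theorem stmt_15 (p : ℕ) (E : Fin p → Fin p → Prop)
    (σ : Equiv.Perm (Fin p)) (htopo : ∀ j k : Fin p, E j k → σ j < σ k)
    (B₀ : Matrix (Fin p) (Fin p) ℝ) (hB₀ : ∀ j k : Fin p, B₀ j k ≠ 0 → E j k)
    (d₀ d : Fin p → ℝ) (hd₀ : ∀ j, 0 < d₀ j) (hd : ∀ j, 0 < d j)
    (S : Matrix (Fin p) (Fin p) ℝ)
    (hS : S = ((1 - B₀)ᵀ)⁻¹ * Matrix.diagonal d₀ * (1 - B₀)⁻¹) :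
    ∀ B : Matrix (Fin p) (Fin p) ℝ, (∀ j k : Fin p, ¬ E j k → B j k = 0) →
      score d S B₀ ≤ score d S B ∧ (B ≠ B₀ → score d S B₀ < score d S B) := by
  intro B hB
  set P : Matrix (Fin p) (Fin p) ℝ := 1 - B₀ with hP
  -- strict triangularity of B₀ and B
  have hstrict : ∀ (M : Matrix (Fin p) (Fin p) ℝ), (∀ j k, M j k ≠ 0 → E j k) →
      ∀ i j : Fin p, ¬ σ i < σ j → M i j = 0 := by
    intro M hM i j hij
    by_contra hne
    exact hij (htopo i j (hM i j hne))
  have hBE : ∀ j k : Fin p, B j k ≠ 0 → E j k := by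
    intro j k h
    by_contra hne
    exact h (hB j k hne)
  have htriB₀ : B₀.BlockTriangular σ := fun i j h =>
    hstrict B₀ hB₀ i j (asymm h)
  have htriP : P.BlockTriangular σ := Matrix.blockTriangular_one.sub htriB₀
  -- determinant of P is 1
  have hB₀ii : ∀ i : Fin p, B₀ i i = 0 := fun i =>
    hstrict B₀ hB₀ i i (lt_irrefl _)
  have hdet : P.det = 1 := by
    rw [htriP.det_fintype]
    refine Finset.prod_eq_one fun k _ => ?_
    haveI : Unique {i // σ i = k} :=
      ⟨⟨⟨σ.symm k, σ.apply_symm_apply k⟩⟩, by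
        rintro ⟨i, hi⟩
        exact Subtype.ext (by simp [← hi])⟩
    rw [Matrix.det_unique]
    show P.toSquareBlock σ k _ _ = 1
    simp [Matrix.toSquareBlock_def, hP, Matrix.sub_apply, hB₀ii]
  have hdetU : IsUnit P.det := by rw [hdet]; exact isUnit_one
  haveI : Invertible P := P.invertibleOfIsUnitDet hdetU
  have htriPinv : P⁻¹.BlockTriangular σ := Matrix.blockTriangular_inv_of_blockTriangular htriP
  -- the key matrix N
  set C : Matrix (Fin p) (Fin p) ℝ := B₀ - B with hC
  set N : Matrix (Fin p) (Fin p) ℝ := P⁻¹ * C with hN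
  have hCstrict : ∀ i j : Fin p, ¬ σ i < σ j → C i j = 0 := by
    intro i j hij
    rw [hC, Matrix.sub_apply, hstrict B₀ hB₀ i j hij, hstrict B hBE i j hij, sub_zero]
  have hNstrict : ∀ i j : Fin p, ¬ σ i < σ j → N i j = 0 := by
    intro i j hij
    rw [hN, Matrix.mul_apply]
    refine Finset.sum_eq_zero fun k _ => ?_
    rcases lt_or_ge (σ k) (σ i) with h | h
    · rw [htriPinv h, zero_mul]
    · have : ¬ σ k < σ j := fun hkj => hij (lt_of_le_of_lt h hkj)
      rw [hCstrict k j this, mul_zero]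
  have hNdiag : ∀ i : Fin p, N i i = 0 := fun i => hNstrict i i (lt_irrefl _)
  -- A-matrices
  have hA₀ : P⁻¹ * (1 - B₀) = 1 := P.nonsing_inv_mul hdetU
  have hAB : P⁻¹ * (1 - B) = 1 + N := by
    have : (1 : Matrix (Fin p) (Fin p) ℝ) - B = P + C := by
      rw [hP, hC, sub_add_sub_cancel]
    rw [this, Matrix.mul_add, P.nonsing_inv_mul hdetU, hN]
  -- score formulas
  have hs₀ : score d S B₀ = ∑ j, ∑ i, d₀ i * ((1 : Matrix (Fin p) (Fin p) ℝ) i j) ^ 2 * (d j)⁻¹ := by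
    rw [hS, score_eq d d₀ hd (1 - B₀) B₀, ← hP, hA₀]
  have hsB : score d S B = ∑ j, ∑ i, d₀ i * ((1 + N) i j) ^ 2 * (d j)⁻¹ := by
    rw [hS, score_eq d d₀ hd (1 - B₀) B, ← hP, hAB]
  -- termwise comparison
  have hterm : ∀ i j : Fin p,
      d₀ i * ((1 : Matrix (Fin p) (Fin p) ℝ) i j) ^ 2 * (d j)⁻¹
        ≤ d₀ i * ((1 + N) i j) ^ 2 * (d j)⁻¹ := by
    intro i j
    rcases eq_or_ne i j with rfl | hij
    · rw [Matrix.add_apply, hNdiag i, add_zero]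
    · rw [Matrix.one_apply_ne hij]
      have : (0:ℝ) ≤ d₀ i * ((1 + N) i j) ^ 2 * (d j)⁻¹ :=
        mul_nonneg (mul_nonneg (hd₀ i).le (sq_nonneg _)) (inv_nonneg.mpr (hd j).le)
      simpa using this
  constructor
  · rw [hs₀, hsB]
    exact Finset.sum_le_sum fun j _ => Finset.sum_le_sum fun i _ => hterm i j
  · intro hBne
    have hNne : N ≠ 0 := by
      intro h0
      apply hBne
      have : C = 0 := by
        have := P.mul_nonsing_inv_cancel_left C hdetU
        rw [← hN] at this
        rw [← this, h0, Matrix.mul_zero]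
      have : B₀ - B = 0 := this
      have := sub_eq_zero.mp this
      exact this.symm
    obtain ⟨i₀, j₀, hN0⟩ : ∃ i j, N i j ≠ 0 := by
      by_contra h
      push_neg at h
      exact hNne (by ext i j; simp [h i j])
    have hij₀ : i₀ ≠ j₀ := by
      intro h; exact hN0 (h ▸ hNdiag i₀)
    rw [hs₀, hsB]
    refine Finset.sum_lt_sum (fun j _ => Finset.sum_le_sum fun i _ => hterm i j) ⟨j₀,
      Finset.mem_univ _, ?_⟩
    refine Finset.sum_lt_sum (fun i _ => hterm i j₀) ⟨i₀, Finset.mem_univ _, ?_⟩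
    rw [Matrix.one_apply_ne hij₀]
    have h1 : (0:ℝ) < d₀ i₀ * ((1 + N) i₀ j₀) ^ 2 * (d j₀)⁻¹ := by
      have : (1 + N) i₀ j₀ ≠ 0 := by
        rw [Matrix.add_apply, Matrix.one_apply_ne hij₀, zero_add]
        exact hN0
      have h2 : 0 < ((1 + N) i₀ j₀) ^ 2 := sq_pos_of_ne_zero this
      have h3 : 0 < (d j₀)⁻¹ := inv_pos.mpr (hd j₀)
      exact mul_pos (mul_pos (hd₀ i₀) h2) h3
    simpa using h1
end
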